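/- Let G = G_0 be a bipartite graph on n vertices having a perfect matching, let k ≥ 1, and let w_0, ..., w_{k−1} be positive integer weight functions on the edges of G. Define inductively G_{i+1} to be the subgraph of G_i consisting of the union of all perfect matchings of G_i of minimum w_i-weight. Let B be an integer exceeding the w_i-weight of every perfect matching of G for every i, and define the combined weight function w = Σ_{i=0}^{k−1} w_i · B^{k−1−i}. Then for every 1 ≤ i ≤ k, if M_1 is a perfect matching of G_i and M_2 is a perfect matching of G_{i−1} that contains an edge not in G_i, then w(M_1) < w(M_2). -/

import Mathlib

/-- `M` is a perfect matching of the graph on vertex set `V` with edge set `F`: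
`M` consists of edges of `F` and every vertex lies in exactly one edge of `M`. -/
def IsPMof {V : Type*} (F M : Finset (Sym2 V)) : Prop :=
  M ⊆ F ∧ ∀ v : V, ∃! e, e ∈ M ∧ v ∈ e

/-- The weight of a matching is the sum of the weights of its edges. -/
def matchWeight {V : Type*} (w : Sym2 V → ℤ) (M : Finset (Sym2 V)) : ℤ := ∑ e ∈ M, w e

namespace PMaux

open Finset

variable {V : Type*} [DecidableEq V]

/-! ### Walk costs -/

def listCost (cost : V → V → WithTop ℤ) : List V → WithTop ℤ
  | [] => 0
  | [_] => 0
  | a :: b :: t => cost a b + listCost cost (b :: t)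

variable {cost : V → V → WithTop ℤ}

lemma listCost_split (a : List V) (x : V) (t : List V) :
    listCost cost (a ++ x :: t) = listCost cost (a ++ [x]) + listCost cost (x :: t) := by
  induction a with
  | nil => simp [listCost]
  | cons h s ih =>
    cases s with
    | nil =>
      cases t with
      | nil => simp [listCost]
      | cons y t' => simp [listCost, add_assoc]
    | cons h2 t2 =>
      show cost h h2 + listCost cost (h2 :: (t2 ++ x :: t))
          = cost h h2 + listCost cost (h2 :: (t2 ++ [x])) + listCost cost (x :: t)
      simp only [List.cons_append] at ih
      rw [ih, ← add_assoc]

lemma listCost_ge_len {C : ℤ} (hC : ∀ u v, ((-C : ℤ) : WithTop ℤ) ≤ cost u v) (hC0 : 0 ≤ C) :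
    ∀ l : List V, ((-(l.length * C) : ℤ) : WithTop ℤ) ≤ listCost cost l := by
  intro l
  induction l with
  | nil =>
    simp only [listCost, List.length_nil]
    exact_mod_cast (by simp : (-(0 * C) : ℤ) ≤ 0)
  | cons a t ih =>
    cases t with
    | nil =>
      simp only [listCost, List.length_singleton]
      exact_mod_cast (by linarith : (-(1 * C) : ℤ) ≤ 0)
    | cons b t2 =>
      have : ((-((a :: b :: t2).length * C) : ℤ) : WithTop ℤ)
          = ((-C : ℤ) : WithTop ℤ) + ((-((b :: t2).length * C) : ℤ) : WithTop ℤ) := by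
        rw [← WithTop.coe_add]
        congr 1
        simp only [List.length_cons]
        push_cast
        ring
      rw [this]
      exact add_le_add (hC a b) ih

lemma not_nodup_decomp : ∀ {l : List V}, ¬ l.Nodup → ∃ a x b c, l = a ++ x :: b ++ x :: c := by
  intro l
  induction l with
  | nil => intro h; exact absurd List.nodup_nil h
  | cons h t ih =>
    intro hnd
    by_cases hm : h ∈ t
    · obtain ⟨s, t', rfl⟩ := List.append_of_mem hm
      exact ⟨[], h, s, t', rfl⟩
    · have : ¬ t.Nodup := by
        intro hn
        exact hnd (List.nodup_cons.mpr ⟨hm, hn⟩)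
      obtain ⟨a, x, b, c, rfl⟩ := ih this
      exact ⟨h :: a, x, b, c, rfl⟩

lemma listCost_lb [Fintype V] {C : ℤ} (hC : ∀ u v, ((-C : ℤ) : WithTop ℤ) ≤ cost u v)
    (hC0 : 0 ≤ C) (hcyc : ∀ (x : V) (b : List V), 0 ≤ listCost cost (x :: b ++ [x])) :
    ∀ l : List V, ((-(Fintype.card V * C) : ℤ) : WithTop ℤ) ≤ listCost cost l := by
  suffices h : ∀ (n : ℕ) (l : List V), l.length ≤ n →
      ((-(Fintype.card V * C) : ℤ) : WithTop ℤ) ≤ listCost cost l by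
    intro l; exact h l.length l le_rfl
  intro n
  induction n with
  | zero =>
    intro l hl
    rw [List.length_eq_zero_iff.mp (Nat.le_zero.mp hl)]
    simp only [listCost]
    exact_mod_cast (by nlinarith [Nat.cast_nonneg (α := ℤ) (Fintype.card V)] :
      (-(Fintype.card V * C) : ℤ) ≤ 0)
  | succ n ih =>
    intro l hl
    by_cases hnd : l.Nodup
    · refine le_trans ?_ (listCost_ge_len hC hC0 l)
      have hlen : (l.length : ℤ) ≤ Fintype.card V := by exact_mod_cast hnd.length_le_card
      exact_mod_cast neg_le_neg (mul_le_mul_of_nonneg_right hlen hC0)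
    · obtain ⟨a, x, b, c, rfl⟩ := not_nodup_decomp hnd
      have key : listCost cost (a ++ x :: c) ≤ listCost cost (a ++ x :: b ++ x :: c) := by
        have e1 : a ++ x :: b ++ x :: c = a ++ x :: (b ++ x :: c) := by simp
        rw [e1, listCost_split a x (b ++ x :: c), listCost_split a x c]
        refine add_le_add_right ?_ _
        have e2 : (x :: (b ++ x :: c)) = (x :: b) ++ x :: c := by simp
        rw [e2, listCost_split (x :: b) x c]
        exact le_add_of_nonneg_left (hcyc x b)
      refine le_trans (ih (a ++ x :: c) ?_) key
      have h1 : (a ++ x :: b ++ x :: c).length = a.length + b.length + c.length + 2 := by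
        simp; omega
      have h2 : (a ++ x :: c).length = a.length + c.length + 1 := by simp; omega
      omega

lemma exists_simple_neg (hneg : ∃ (x : V) (b : List V), listCost cost (x :: b ++ [x]) < 0) :
    ∃ (y : V) (bb : List V), (y :: bb).Nodup ∧ listCost cost (y :: bb ++ [y]) < 0 := by
  obtain ⟨x, b, hneg⟩ := hneg
  suffices h : ∀ (n : ℕ) (x : V) (b : List V), b.length ≤ n → listCost cost (x :: b ++ [x]) < 0 →
      ∃ (y : V) (bb : List V), (y :: bb).Nodup ∧ listCost cost (y :: bb ++ [y]) < 0 from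
    h b.length x b le_rfl hneg
  clear hneg x b
  intro n
  induction n with
  | zero =>
    intro x b hb hneg
    obtain rfl := List.length_eq_zero_iff.mp (Nat.le_zero.mp hb)
    exact ⟨x, [], List.nodup_singleton x, hneg⟩
  | succ n ih =>
    intro x b hb hneg
    by_cases hnd : (x :: b).Nodup
    · exact ⟨x, b, hnd, hneg⟩
    by_cases hxb : x ∈ b
    · obtain ⟨b₁, b₂, rfl⟩ := List.append_of_mem hxb
      have e1 : x :: (b₁ ++ x :: b₂) ++ [x] = (x :: b₁) ++ x :: (b₂ ++ [x]) := by simp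
      rw [e1, listCost_split (x :: b₁) x (b₂ ++ [x])] at hneg
      have : listCost cost ((x :: b₁) ++ [x]) < 0 ∨ listCost cost (x :: b₂ ++ [x]) < 0 := by
        by_contra hcon
        push_neg at hcon
        exact absurd (add_nonneg hcon.1 hcon.2) (not_le.mpr hneg)
      rcases this with h | h
      · refine ih x b₁ ?_ (by simpa using h)
        simp at hb ⊢; omega
      · refine ih x b₂ ?_ h
        simp at hb ⊢; omega
    · have hbnd : ¬ b.Nodup := fun hn => hnd (List.nodup_cons.mpr ⟨hxb, hn⟩)
      obtain ⟨b₁, y, b₂, b₃, rfl⟩ := not_nodup_decomp hbnd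
      have e1' : x :: (b₁ ++ y :: b₂ ++ y :: b₃) ++ [x]
          = (x :: b₁) ++ y :: (b₂ ++ y :: (b₃ ++ [x])) := by simp
      rw [e1', listCost_split (x :: b₁) y (b₂ ++ y :: (b₃ ++ [x]))] at hneg
      have e2 : y :: (b₂ ++ y :: (b₃ ++ [x])) = (y :: b₂) ++ y :: (b₃ ++ [x]) := by simp
      rw [e2, listCost_split (y :: b₂) y (b₃ ++ [x])] at hneg
      by_cases hmid : listCost cost ((y :: b₂) ++ [y]) < 0
      · refine ih y b₂ ?_ (by simpa using hmid)
        simp at hb ⊢; omega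
      · push_neg at hmid
        have : listCost cost ((x :: b₁) ++ [y]) + listCost cost (y :: (b₃ ++ [x])) < 0 := by
          calc listCost cost ((x :: b₁) ++ [y]) + listCost cost (y :: (b₃ ++ [x]))
              ≤ listCost cost ((x :: b₁) ++ [y])
                + (listCost cost ((y :: b₂) ++ [y]) + listCost cost (y :: (b₃ ++ [x]))) := by
                refine add_le_add_right (le_add_of_nonneg_left hmid) _
            _ < 0 := hneg
        rw [← listCost_split (x :: b₁) y (b₃ ++ [x])] at this
        refine ih x (b₁ ++ y :: b₃) ?_ (by simpa using this)
        simp at hb ⊢; omega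

/-! ### Bellman–Ford -/

def BF [Fintype V] (cost : V → V → WithTop ℤ) : ℕ → V → WithTop ℤ
  | 0 => fun _ => 0
  | n + 1 => fun v => min (BF cost n v) (Finset.univ.inf fun u => cost u v + BF cost n u)

variable [Fintype V]

lemma BF_le_zero (n : ℕ) (v : V) : BF cost n v ≤ 0 := by
  induction n with
  | zero => exact le_refl _
  | succ n ih => exact le_trans (min_le_left _ _) ih

lemma BF_step (n : ℕ) (u v : V) : BF cost (n + 1) v ≤ cost u v + BF cost n u :=
  le_trans (min_le_right _ _) (Finset.inf_le (mem_univ u))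

lemma BF_exists_walk [Nonempty V] (n : ℕ) (v : V) :
    ∃ l : List V, listCost cost (l ++ [v]) ≤ BF cost n v := by
  induction n generalizing v with
  | zero => exact ⟨[], le_refl 0⟩
  | succ n ih =>
    obtain ⟨u, -, hu⟩ := Finset.exists_mem_eq_inf Finset.univ univ_nonempty
      (fun u => cost u v + BF cost n u)
    rcases le_total (BF cost n v) (Finset.univ.inf fun u => cost u v + BF cost n u) with h | h
    · obtain ⟨l, hl⟩ := ih v
      refine ⟨l, le_trans hl ?_⟩
      show _ ≤ min _ _
      rw [min_eq_left h]
    · obtain ⟨l, hl⟩ := ih u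
      refine ⟨l ++ [u], ?_⟩
      have e1 : (l ++ [u]) ++ [v] = l ++ u :: [v] := by simp
      rw [e1, listCost_split l u [v]]
      have e2 : listCost cost [u, v] = cost u v := by simp [listCost]
      rw [e2]
      show _ ≤ min _ _
      rw [min_eq_right h, hu]
      rw [add_comm]
      exact add_le_add_right hl _

lemma exists_potential [Nonempty V] {C : ℤ}
    (hC : ∀ u v, ((-C : ℤ) : WithTop ℤ) ≤ cost u v) (hC0 : 0 ≤ C)
    (hcyc : ∀ (x : V) (b : List V), 0 ≤ listCost cost (x :: b ++ [x])) :
    ∃ p : V → ℤ, ∀ u v, ((p v : ℤ) : WithTop ℤ) ≤ cost u v + ((p u : ℤ) : WithTop ℤ) := by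
  classical
  set K : ℤ := Fintype.card V * C with hK
  have hfin : ∀ n v, ∃ z : ℤ, BF cost n v = (z : WithTop ℤ) := by
    intro n v
    have h1 : BF cost n v ≤ 0 := BF_le_zero n v
    have : BF cost n v ≠ ⊤ := ne_top_of_le_ne_top (by exact WithTop.coe_ne_top) h1
    exact (WithTop.ne_top_iff_exists.mp this).imp fun z hz => hz.symm
  choose bf hbf using hfin
  have hlb : ∀ n v, (-K : ℤ) ≤ bf n v := by
    intro n v
    obtain ⟨l, hl⟩ := BF_exists_walk (cost := cost) n v
    have := le_trans (listCost_lb hC hC0 hcyc (l ++ [v])) hl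
    rw [hbf] at this
    exact_mod_cast this
  have hmono : ∀ n v, bf (n + 1) v ≤ bf n v := by
    intro n v
    have : BF cost (n + 1) v ≤ BF cost n v := min_le_left _ _
    rw [hbf, hbf] at this
    exact_mod_cast this
  have hstab : ∃ n, ∀ v, BF cost (n + 1) v = BF cost n v := by
    by_contra hcon
    push_neg at hcon
    have hdec : ∀ n, (∑ v, bf (n + 1) v) < ∑ v, bf n v := by
      intro n
      obtain ⟨v, hv⟩ := hcon n
      refine Finset.sum_lt_sum (fun u _ => hmono n u) ⟨v, mem_univ v, ?_⟩
      have hle := hmono n v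
      rcases lt_or_eq_of_le hle with h | h
      · exact h
      · exfalso; apply hv; rw [hbf, hbf, h]
    have hsum : ∀ n, (∑ v, bf n v) ≤ ∑ v, bf 0 v - n := by
      intro n
      induction n with
      | zero => simp
      | succ n ih =>
        have := hdec n
        push_cast
        omega
    have hlbsum : ∀ n, (- (Fintype.card V * K) : ℤ) ≤ ∑ v : V, bf n v := by
      intro n
      calc (- (Fintype.card V * K) : ℤ) = ∑ _v : V, (-K : ℤ) := by
            rw [Finset.sum_const, card_univ]; push_cast; ring
        _ ≤ ∑ v, bf n v := Finset.sum_le_sum fun v _ => hlb n v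
    obtain ⟨n, hn⟩ : ∃ n : ℕ, (∑ v, bf 0 v - n : ℤ) < - (Fintype.card V * K) := by
      refine ⟨(∑ v, bf 0 v + Fintype.card V * K + 1).toNat, ?_⟩
      have := Int.self_le_toNat (∑ v, bf 0 v + Fintype.card V * K + 1)
      omega
    have h1 := hlbsum n; have h2 := hsum n; omega
  obtain ⟨n, hn⟩ := hstab
  refine ⟨bf n, fun u v => ?_⟩
  calc ((bf n v : ℤ) : WithTop ℤ) = BF cost n v := by rw [hbf]
    _ = BF cost (n + 1) v := (hn v).symm
    _ ≤ cost u v + BF cost n u := BF_step n u v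
    _ = cost u v + ((bf n u : ℤ) : WithTop ℤ) := by rw [hbf]

/-! ### matchings, partners, colored sums -/

variable {F : Finset (Sym2 V)} {cl : V → Bool}

/-- the left part -/
def Lf (cl : V → Bool) : Finset V := univ.filter fun v => cl v = false

/-- partner vertex in a perfect matching -/
noncomputable def partner {A : Finset (Sym2 V)} (hA : IsPMof F A) (v : V) : V :=
  Sym2.Mem.other' (hA.2 v).exists.choose_spec.2

variable {A : Finset (Sym2 V)}

lemma partner_spec (hA : IsPMof F A) (v : V) : s(v, partner hA v) ∈ A := by
  rw [partner, Sym2.other_spec' (hA.2 v).exists.choose_spec.2]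
  exact (hA.2 v).exists.choose_spec.1

lemma partner_unique (hA : IsPMof F A) {e : Sym2 V} {v : V} (he : e ∈ A) (hv : v ∈ e) :
    e = s(v, partner hA v) :=
  (hA.2 v).unique ⟨he, hv⟩ ⟨partner_spec hA v, Sym2.mem_mk_left _ _⟩

lemma partner_invol (hA : IsPMof F A) (v : V) : partner hA (partner hA v) = v := by
  have h1 := partner_unique hA (partner_spec hA v) (Sym2.mem_mk_right v (partner hA v))
  rw [Sym2.eq_iff] at h1
  rcases h1 with ⟨h, h'⟩ | ⟨h, h'⟩
  · exact h'.symm.trans h.symm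
  · exact h.symm

lemma partner_cl (hF : ∀ u v : V, s(u, v) ∈ F → cl u ≠ cl v) (hA : IsPMof F A) (v : V) :
    cl (partner hA v) ≠ cl v :=
  fun h => hF v (partner hA v) (hA.1 (partner_spec hA v)) h.symm

/-- sum over a perfect matching as sum over left vertices -/
lemma sum_left (hF : ∀ u v : V, s(u, v) ∈ F → cl u ≠ cl v) (hA : IsPMof F A)
    (σ : V → V) (hσ : ∀ v, s(v, σ v) ∈ A) (f : Sym2 V → ℤ) :
    ∑ e ∈ A, f e = ∑ u ∈ Lf cl, f s(u, σ u) := by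
  symm
  refine Finset.sum_bij (fun u _ => s(u, σ u)) (fun u _ => hσ u) ?_ ?_ (fun u _ => rfl)
  · intro u hu u' hu' heq
    simp only [Lf, mem_filter] at hu hu'
    rw [Sym2.eq_iff] at heq
    rcases heq with ⟨h, -⟩ | ⟨h1, h2⟩
    · exact h
    · exfalso
      have := hF u' (σ u') (hA.1 (hσ u'))
      rw [← h1, hu'.2, hu.2] at this
      exact this rfl
  · intro e he
    induction e with
    | _ a b =>
      have hab : cl a ≠ cl b := hF a b (hA.1 he)
      cases ha : cl a
      · exact ⟨a, by simp [Lf, ha],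
          ((hA.2 a).unique ⟨he, Sym2.mem_mk_left a b⟩ ⟨hσ a, Sym2.mem_mk_left _ _⟩).symm⟩
      · have hb : cl b = false := by
          cases hbb : cl b
          · rfl
          · rw [ha, hbb] at hab; exact absurd rfl hab
        exact ⟨b, by simp [Lf, hb],
          ((hA.2 b).unique ⟨he, Sym2.mem_mk_right a b⟩ ⟨hσ b, Sym2.mem_mk_left _ _⟩).symm⟩

/-- transport a sum over the left part to the right part -/
lemma sum_pair (σ : V → V) (hinv : ∀ v, σ (σ v) = v) (hcl : ∀ v, cl (σ v) ≠ cl v) (p : V → ℤ) :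
    ∑ u ∈ Lf cl, p (σ u) = ∑ v ∈ univ.filter (fun v => cl v = true), p v := by
  refine Finset.sum_nbij' σ σ ?_ ?_ (fun a _ => hinv a) (fun a _ => hinv a) (fun a _ => rfl)
  · intro a ha
    simp only [Lf, mem_filter, mem_univ, true_and] at ha ⊢
    cases h : cl (σ a)
    · exact absurd (h.trans ha.symm) (hcl a)
    · rfl
  · intro a ha
    simp only [Lf, mem_filter, mem_univ, true_and] at ha ⊢
    cases h : cl (σ a)
    · rfl
    · exact absurd (h.trans ha.symm) (hcl a)

/-- build a perfect matching from an involution -/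
lemma build_PM (σ : V → V) (hinv : ∀ v, σ (σ v) = v) (hσF : ∀ v, s(v, σ v) ∈ F) :
    IsPMof F (Finset.image (fun v => s(v, σ v)) univ) := by
  constructor
  · intro e he
    simp only [mem_image, mem_univ, true_and] at he
    obtain ⟨v, rfl⟩ := he
    exact hσF v
  · intro v
    refine ⟨s(v, σ v), ⟨mem_image_of_mem _ (mem_univ v), Sym2.mem_mk_left _ _⟩, ?_⟩
    rintro e ⟨he, hv⟩
    simp only [mem_image, mem_univ, true_and] at he
    obtain ⟨u, rfl⟩ := he
    rw [Sym2.mem_iff] at hv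
    rcases hv with rfl | rfl
    · rfl
    · rw [hinv u]
      exact Sym2.eq_swap

lemma listCost_zip (cost : V → V → WithTop ℤ) :
    ∀ l : List V, listCost cost l = ((l.zip l.tail).map fun p => cost p.1 p.2).sum := by
  intro l
  induction l with
  | nil => simp [listCost]
  | cons a t ih =>
    cases t with
    | nil => simp [listCost]
    | cons b t2 =>
      rw [show (a :: b :: t2).zip ((a :: b :: t2).tail) = (a, b) :: ((b :: t2).zip t2) from rfl]
      rw [List.map_cons, List.sum_cons]
      show cost a b + listCost cost (b :: t2) = cost a b + _
      rw [ih]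
      rfl

lemma listCost_cycle {cost : V → V → WithTop ℤ} (r : List V) (hr : r ≠ []) (hnd : r.Nodup)
    (nxt : V → V) (hnxt : ∀ (v : V) (h : v ∈ r), nxt v = r.next v h) :
    listCost cost (r ++ [r.head hr]) = ∑ v ∈ r.toFinset, cost v (nxt v) := by
  have hn : 0 < r.length := List.length_pos_iff.mpr hr
  set l : List V := r ++ [r.head hr] with hl
  have hlen : l.length = r.length + 1 := by simp [hl]
  have htail : l.tail.length = r.length := by simp [hl]
  have hzip : l.zip l.tail = r.map (fun v => (v, nxt v)) := by
    refine List.ext_getElem ?_ ?_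
    · simp [hl]
    · intro i h1 h2
      have hi : i < r.length := by simpa using h2
      have hi1 : i < l.length := by omega
      have hi2 : i + 1 < l.length := by omega
      have hmod : (i + 1) % r.length < r.length := Nat.mod_lt _ hn
      have e0 : (l.zip l.tail)[i] = (l[i], l[i + 1]) := by
        rw [List.getElem_zip, List.getElem_tail]
      have e1 : l[i] = r[i] := List.getElem_append_left hi
      have e2 : l[i + 1] = r[(i + 1) % r.length] := by
        by_cases hc : i + 1 < r.length
        · simp only [Nat.mod_eq_of_lt hc]
          exact List.getElem_append_left hc
        · have hceq : i + 1 = r.length := by omega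
          have : l[i + 1] = (r ++ [r.head hr])[i + 1] := rfl
          rw [this, List.getElem_append_right (by omega)]
          simp [hceq, List.head_eq_getElem]
      have e3 : nxt r[i] = r[(i + 1) % r.length] := by
        have hmem : r[i] ∈ r := List.getElem_mem _
        rw [hnxt r[i] hmem]
        have := List.next_getElem r hnd i hi
        simpa [List.get_eq_getElem] using this
      rw [e0, List.getElem_map, e1, e2, ← e3]
  rw [listCost_zip, hzip, List.map_map]
  rw [List.sum_toFinset _ hnd]
  rfl


lemma next_congr (l : List V) {x y : V} (h : x = y) (hx : x ∈ l) (hy : y ∈ l) :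
    l.next x hx = l.next y hy := by subst h; rfl

lemma prev_congr (l : List V) {x y : V} (h : x = y) (hx : x ∈ l) (hy : y ∈ l) :
    l.prev x hx = l.prev y hy := by subst h; rfl

/-! ### no negative cycle -/

lemma no_neg_cycle {N : Finset (Sym2 V)}
    (hF : ∀ u v : V, s(u, v) ∈ F → cl u ≠ cl v) (ω : Sym2 V → ℤ)
    (hN : IsPMof F N) (hNmin : ∀ P, IsPMof F P → matchWeight ω N ≤ matchWeight ω P)
    (cost : V → V → WithTop ℤ)
    (hcost : ∀ u v, cost u v =
      if s(u, v) ∈ F ∧ cl u = false then ((ω s(u, v) : ℤ) : WithTop ℤ)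
      else if s(u, v) ∈ N ∧ cl u = true then ((-ω s(u, v) : ℤ) : WithTop ℤ) else ⊤) :
    ∀ (x : V) (b : List V), 0 ≤ listCost cost (x :: b ++ [x]) := by
  classical
  by_contra hcon
  push_neg at hcon
  obtain ⟨x0, b0, hneg0⟩ := hcon
  obtain ⟨y, bb, hnd, hneg1⟩ := exists_simple_neg ⟨x0, b0, hneg0⟩
  set r : List V := y :: bb with hrdef
  have hr : r ≠ [] := by simp [hrdef]
  have hhead : r.head hr = y := rfl
  have hneg : listCost cost (r ++ [r.head hr]) < 0 := by rw [hhead]; exact hneg1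
  set μ : V → V := partner hN with hμdef
  have hμmem : ∀ v, s(v, μ v) ∈ N := partner_spec hN
  have hμinv : ∀ v, μ (μ v) = v := partner_invol hN
  have hμcl : ∀ v, cl (μ v) ≠ cl v := partner_cl hF hN
  set nxt : V → V := fun v => if h : v ∈ r then r.next v h else v with hnxtdef
  set prv : V → V := fun v => if h : v ∈ r then r.prev v h else v with hprvdef
  have hnxtr : ∀ v ∈ r, nxt v ∈ r := by
    intro v hv; rw [hnxtdef]; simp only [dif_pos hv]; exact List.next_mem r v hv
  have hprvr : ∀ v ∈ r, prv v ∈ r := by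
    intro v hv; rw [hprvdef]; simp only [dif_pos hv]; exact List.prev_mem r v hv
  have hnxteq : ∀ (v : V) (h : v ∈ r), nxt v = r.next v h := by
    intro v h; rw [hnxtdef]; simp only [dif_pos h]
  have hprveq : ∀ (v : V) (h : v ∈ r), prv v = r.prev v h := by
    intro v h; rw [hprvdef]; simp only [dif_pos h]
  have hprvnxt : ∀ v ∈ r, prv (nxt v) = v := by
    intro v hv
    have h1 : nxt v ∈ r := hnxtr v hv
    rw [hprveq (nxt v) h1]
    exact (prev_congr r (hnxteq v hv) h1 (List.next_mem r v hv)).trans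
      (List.prev_next r hnd v hv)
  have hnxtprv : ∀ v ∈ r, nxt (prv v) = v := by
    intro v hv
    have h1 : prv v ∈ r := hprvr v hv
    rw [hnxteq (prv v) h1]
    exact (next_congr r (hprveq v hv) h1 (List.prev_mem r v hv)).trans
      (List.next_prev r hnd v hv)
  have hsum : listCost cost (r ++ [r.head hr]) = ∑ v ∈ r.toFinset, cost v (nxt v) :=
    listCost_cycle r hr hnd nxt hnxteq
  have harc : ∀ v ∈ r, cost v (nxt v) ≠ ⊤ := by
    intro v hv htop
    have h1 : listCost cost (r ++ [r.head hr]) = ⊤ := by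
      rw [hsum]
      exact WithTop.sum_eq_top.mpr ⟨v, List.mem_toFinset.mpr hv, htop⟩
    rw [h1] at hneg
    exact not_top_lt hneg
  have hva : ∀ v ∈ r, cl v = false →
      s(v, nxt v) ∈ F ∧ cost v (nxt v) = ((ω s(v, nxt v) : ℤ) : WithTop ℤ) := by
    intro v hv hcl
    have h := harc v hv
    rw [hcost v (nxt v)] at h ⊢
    by_cases h1 : s(v, nxt v) ∈ F ∧ cl v = false
    · exact ⟨h1.1, if_pos h1⟩
    · exfalso
      rw [if_neg h1] at h
      by_cases h2 : s(v, nxt v) ∈ N ∧ cl v = true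
      · rw [h2.2] at hcl; exact Bool.true_eq_false.mp hcl
      · rw [if_neg h2] at h; exact h rfl
  have hvb : ∀ v ∈ r, cl v = true →
      nxt v = μ v ∧ cost v (nxt v) = ((-ω s(v, nxt v) : ℤ) : WithTop ℤ) := by
    intro v hv hcl
    have h := harc v hv
    rw [hcost v (nxt v)] at h ⊢
    have h1 : ¬ (s(v, nxt v) ∈ F ∧ cl v = false) := by
      rintro ⟨-, hf⟩; rw [hcl] at hf; exact Bool.true_eq_false.mp hf
    rw [if_neg h1] at h ⊢
    by_cases h2 : s(v, nxt v) ∈ N ∧ cl v = true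
    · refine ⟨?_, if_pos h2⟩
      have h3 := partner_unique hN h2.1 (Sym2.mem_mk_left v (nxt v))
      rw [Sym2.eq_iff] at h3
      rcases h3 with ⟨-, h4⟩ | ⟨h4, h5⟩
      · exact h4
      · exfalso
        have h6 : μ v = v := h4.symm
        exact hμcl v (by rw [h6])
    · rw [if_neg h2] at h; exact absurd rfl h
  have hclnxt : ∀ v ∈ r, cl (nxt v) ≠ cl v := by
    intro v hv
    cases hc : cl v
    · exact fun hh => hF v (nxt v) (hva v hv hc).1 (by rw [hh, hc])
    · rw [(hvb v hv hc).1]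
      intro hh
      exact hμcl v (by rw [hh, hc])
  have hμprv : ∀ v ∈ r, cl v = false → μ v = prv v := by
    intro v hv hcl
    have hpv : prv v ∈ r := hprvr v hv
    have hnp : nxt (prv v) = v := hnxtprv v hv
    cases hcp : cl (prv v)
    · exfalso
      have := hclnxt (prv v) hpv
      rw [hnp, hcl, hcp] at this
      exact this rfl
    · have h1 := (hvb (prv v) hpv hcp).1
      rw [hnp] at h1
      exact (congrArg μ h1).trans (hμinv (prv v))
  have hμr : ∀ v ∈ r, μ v ∈ r := by
    intro v hv
    cases hc : cl v
    · rw [hμprv v hv hc]; exact hprvr v hv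
    · rw [← (hvb v hv hc).1]; exact hnxtr v hv
  have hμnr : ∀ v, v ∉ r → μ v ∉ r := by
    intro v hv hmv
    exact hv (by rw [← hμinv v]; exact hμr (μ v) hmv)
  set σ : V → V := fun v => if v ∈ r then (if cl v = false then nxt v else prv v) else μ v
    with hσdef
  have hσr : ∀ v ∈ r, cl v = false → σ v = nxt v := by
    intro v hv hc; rw [hσdef]; simp only [if_pos hv, if_pos hc]
  have hσr' : ∀ v ∈ r, cl v = true → σ v = prv v := by
    intro v hv hc; rw [hσdef]
    simp only [if_pos hv, hc]
    norm_num
  have hσnr : ∀ v, v ∉ r → σ v = μ v := by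
    intro v hv; rw [hσdef]; simp only [if_neg hv]
  have hclprv : ∀ v ∈ r, cl v = true → cl (prv v) = false := by
    intro v hv hc
    have hpv : prv v ∈ r := hprvr v hv
    cases hcp : cl (prv v)
    · rfl
    · exfalso
      have := hclnxt (prv v) hpv
      rw [hnxtprv v hv, hc, hcp] at this
      exact this rfl
  have hσinv : ∀ v, σ (σ v) = v := by
    intro v
    by_cases hv : v ∈ r
    · cases hc : cl v
      · rw [hσr v hv hc]
        have h1 : nxt v ∈ r := hnxtr v hv
        have h2 : cl (nxt v) = true := by
          cases hcn : cl (nxt v)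
          · exfalso; exact hclnxt v hv (by rw [hcn, hc])
          · rfl
        rw [hσr' (nxt v) h1 h2]
        exact hprvnxt v hv
      · rw [hσr' v hv hc]
        have h1 : prv v ∈ r := hprvr v hv
        rw [hσr (prv v) h1 (hclprv v hv hc)]
        exact hnxtprv v hv
    · rw [hσnr v hv, hσnr (μ v) (hμnr v hv), hμinv]
  have hσF : ∀ v, s(v, σ v) ∈ F := by
    intro v
    by_cases hv : v ∈ r
    · cases hc : cl v
      · rw [hσr v hv hc]; exact (hva v hv hc).1
      · rw [hσr' v hv hc, Sym2.eq_swap]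
        have h1 : prv v ∈ r := hprvr v hv
        have h2 := (hva (prv v) h1 (hclprv v hv hc)).1
        rw [hnxtprv v hv] at h2
        exact h2
    · rw [hσnr v hv]; exact hN.1 (hμmem v)
  -- the swapped matching
  set M' : Finset (Sym2 V) := Finset.image (fun v => s(v, σ v)) univ with hM'def
  have hM' : IsPMof F M' := build_PM σ hσinv hσF
  have hw1 : matchWeight ω M' = ∑ u ∈ Lf cl, ω s(u, σ u) :=
    sum_left hF hM' σ (fun v => mem_image_of_mem _ (mem_univ v)) ω
  have hw2 : matchWeight ω N = ∑ u ∈ Lf cl, ω s(u, μ u) :=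
    sum_left hF hN μ hμmem ω
  -- the cycle cost as an integer sum
  set zval : V → ℤ := fun v => if cl v = false then ω s(v, nxt v) else -ω s(v, nxt v)
    with hzdef
  have hz : ∀ v ∈ r.toFinset, cost v (nxt v) = ((zval v : ℤ) : WithTop ℤ) := by
    intro v hv
    rw [List.mem_toFinset] at hv
    cases hc : cl v
    · rw [hzdef]
      simp only [if_pos hc]
      exact (hva v hv hc).2
    · rw [hzdef]
      simp only [if_neg (by simp [hc] : ¬ (cl v = false))]
      exact (hvb v hv hc).2
  have hsum2 : listCost cost (r ++ [r.head hr]) = ((∑ v ∈ r.toFinset, zval v : ℤ) : WithTop ℤ) := by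
    rw [hsum, WithTop.coe_sum]
    exact Finset.sum_congr rfl hz
  have hzneg : ∑ v ∈ r.toFinset, zval v < 0 := by
    rw [hsum2] at hneg
    exact_mod_cast hneg
  -- split the cycle sum by colors
  set Sf : Finset V := r.toFinset.filter (fun v => cl v = false) with hSfdef
  set St : Finset V := r.toFinset.filter (fun v => ¬ (cl v = false)) with hStdef
  have hsplit : ∑ v ∈ r.toFinset, zval v = (∑ v ∈ Sf, zval v) + ∑ v ∈ St, zval v :=
    (Finset.sum_filter_add_sum_filter_not _ _ _).symm
  have hSfval : ∀ u ∈ Sf, zval u = ω s(u, nxt u) := by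
    intro u hu
    rw [hzdef]
    simp only [if_pos (mem_filter.mp hu).2]
  have hStval : ∀ v ∈ St, zval v = -ω s(v, μ v) := by
    intro v hv
    obtain ⟨hvr, hvc⟩ := mem_filter.mp hv
    rw [List.mem_toFinset] at hvr
    have hct : cl v = true := by
      cases hc : cl v
      · exact absurd hc hvc
      · rfl
    rw [hzdef]
    simp only [if_neg hvc]
    rw [(hvb v hvr hct).1]
  have hStSf : ∑ v ∈ St, zval v = ∑ u ∈ Sf, -ω s(u, μ u) := by
    rw [Finset.sum_congr rfl hStval]
    refine Finset.sum_nbij' μ μ ?_ ?_ (fun a _ => hμinv a) (fun a _ => hμinv a) ?_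
    · intro v hv
      obtain ⟨hvr, hvc⟩ := mem_filter.mp hv
      rw [List.mem_toFinset] at hvr
      refine mem_filter.mpr ⟨List.mem_toFinset.mpr (hμr v hvr), ?_⟩
      cases hc : cl (μ v)
      · rfl
      · exfalso
        have hct : cl v = true := by
          cases hcc : cl v
          · exact absurd hcc hvc
          · rfl
        exact hμcl v (hc.trans hct.symm)
    · intro u hu
      obtain ⟨hur, huc⟩ := mem_filter.mp hu
      rw [List.mem_toFinset] at hur
      refine mem_filter.mpr ⟨List.mem_toFinset.mpr (hμr u hur), ?_⟩
      intro hc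
      exact hμcl u (hc.trans huc.symm)
    · intro v hv
      have : s(v, μ v) = s(μ v, μ (μ v)) := by
        rw [hμinv v]
        exact Sym2.eq_swap
      rw [this]
  -- weight difference equals the cycle sum
  have hLfSf : (Lf cl).filter (fun u => u ∈ r) = Sf := by
    ext u
    simp only [hSfdef, Lf, mem_filter, mem_univ, true_and, List.mem_toFinset]
    tauto
  have hdiff : matchWeight ω M' - matchWeight ω N = ∑ v ∈ r.toFinset, zval v := by
    rw [hw1, hw2, ← Finset.sum_sub_distrib]
    have hzero : ∀ u ∈ Lf cl, u ∉ (Lf cl).filter (fun u => u ∈ r) →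
        ω s(u, σ u) - ω s(u, μ u) = 0 := by
      intro u hu hnu
      have hur : u ∉ r := by
        intro hur
        exact hnu (mem_filter.mpr ⟨hu, hur⟩)
      rw [hσnr u hur]
      ring
    rw [← Finset.sum_subset (Finset.filter_subset _ _) hzero, hLfSf]
    rw [hsplit, hStSf, ← Finset.sum_add_distrib]
    refine Finset.sum_congr rfl ?_
    intro u hu
    obtain ⟨hur, huc⟩ := mem_filter.mp hu
    rw [List.mem_toFinset] at hur
    rw [hσr u hur huc, hSfval u hu]
    ring
  have := hNmin M' hM'
  rw [hsplit] at hzneg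
  rw [hsplit] at hdiff
  omega

/-! ### the crux -/

lemma crux (hF : ∀ u v : V, s(u, v) ∈ F → cl u ≠ cl v) (ω : Sym2 V → ℤ)
    {M : Finset (Sym2 V)}
    (hMU : ∀ e ∈ M, ∃ P, IsPMof F P ∧
      (∀ Q, IsPMof F Q → matchWeight ω P ≤ matchWeight ω Q) ∧ e ∈ P)
    (hM : ∀ v : V, ∃! e, e ∈ M ∧ v ∈ e) :
    ∀ Q, IsPMof F Q → matchWeight ω M ≤ matchWeight ω Q := by
  classical
  intro Q hQ
  have hMF : IsPMof F M := by
    refine ⟨fun e he => ?_, hM⟩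
    obtain ⟨P, hP, -, heP⟩ := hMU e he
    exact hP.1 heP
  by_cases hV : IsEmpty V
  · have hempty : ∀ S : Finset (Sym2 V), S = ∅ := by
      intro S
      refine Finset.eq_empty_of_forall_notMem fun e he => ?_
      induction e with
      | _ a b => exact (hV.false a).elim
    rw [hempty M, hempty Q]
  haveI : Nonempty V := not_isEmpty_iff.mp hV
  -- a minimum weight perfect matching N
  set PMs : Finset (Finset (Sym2 V)) := F.powerset.filter (fun P => IsPMof F P) with hPMs
  have hQP : Q ∈ PMs := mem_filter.mpr ⟨mem_powerset.mpr hQ.1, hQ⟩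
  obtain ⟨N, hNP, hNmin'⟩ := Finset.exists_min_image PMs (matchWeight ω) ⟨Q, hQP⟩
  have hN : IsPMof F N := (mem_filter.mp hNP).2
  have hNmin : ∀ P, IsPMof F P → matchWeight ω N ≤ matchWeight ω P := fun P hP =>
    hNmin' P (mem_filter.mpr ⟨mem_powerset.mpr hP.1, hP⟩)
  -- the cost function and potentials
  set cost : V → V → WithTop ℤ := fun u v =>
    if s(u, v) ∈ F ∧ cl u = false then ((ω s(u, v) : ℤ) : WithTop ℤ)
    else if s(u, v) ∈ N ∧ cl u = true then ((-ω s(u, v) : ℤ) : WithTop ℤ) else ⊤ with hcostdef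
  have hcost : ∀ u v, cost u v =
      if s(u, v) ∈ F ∧ cl u = false then ((ω s(u, v) : ℤ) : WithTop ℤ)
      else if s(u, v) ∈ N ∧ cl u = true then ((-ω s(u, v) : ℤ) : WithTop ℤ) else ⊤ :=
    fun u v => by rw [hcostdef]
  set C : ℤ := ∑ e ∈ F, |ω e| with hCdef
  have hC0 : 0 ≤ C := Finset.sum_nonneg fun e _ => abs_nonneg _
  have habs : ∀ e ∈ F, |ω e| ≤ C := fun e he =>
    Finset.single_le_sum (fun e _ => abs_nonneg (ω e)) he
  have hC : ∀ u v, ((-C : ℤ) : WithTop ℤ) ≤ cost u v := by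
    intro u v
    rw [hcost]
    split_ifs with h1 h2
    · have := habs _ h1.1
      have h3 : (-C : ℤ) ≤ ω s(u, v) := by
        have := neg_abs_le (ω s(u, v)); omega
      exact_mod_cast h3
    · have := habs _ (hN.1 h2.1)
      have h3 : (-C : ℤ) ≤ -ω s(u, v) := by
        have := le_abs_self (ω s(u, v)); omega
      exact_mod_cast h3
    · exact le_top
  have hcyc := no_neg_cycle hF ω hN hNmin cost hcost
  obtain ⟨p, hp⟩ := exists_potential hC hC0 hcyc
  have hpa : ∀ u v, s(u, v) ∈ F → cl u = false → p v ≤ p u + ω s(u, v) := by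
    intro u v h1 h2
    have h3 := hp u v
    rw [hcost, if_pos ⟨h1, h2⟩, ← WithTop.coe_add] at h3
    have : p v ≤ ω s(u, v) + p u := by exact_mod_cast h3
    omega
  have hpb : ∀ u v, s(u, v) ∈ N → cl u = true → p v ≤ p u - ω s(u, v) := by
    intro u v h1 h2
    have h3 := hp u v
    have hn1 : ¬ (s(u, v) ∈ F ∧ cl u = false) := by
      rintro ⟨-, hf⟩; rw [h2] at hf; exact Bool.true_eq_false.mp hf
    rw [hcost, if_neg hn1, if_pos ⟨h1, h2⟩, ← WithTop.coe_add] at h3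
    have : p v ≤ -ω s(u, v) + p u := by exact_mod_cast h3
    omega
  -- the baseline value T
  set T : ℤ := (∑ v ∈ univ.filter (fun v => cl v = true), p v) - ∑ u ∈ Lf cl, p u with hTdef
  -- decomposition of weight minus T over any PM
  have key1 : ∀ (A : Finset (Sym2 V)) (hA : IsPMof F A), matchWeight ω A - T =
      ∑ u ∈ Lf cl, (ω s(u, partner hA u) - (p (partner hA u) - p u)) := by
    intro A hA
    have h1 : matchWeight ω A = ∑ u ∈ Lf cl, ω s(u, partner hA u) :=
      sum_left hF hA _ (partner_spec hA) ω
    have h2 : ∑ u ∈ Lf cl, p (partner hA u) = ∑ v ∈ univ.filter (fun v => cl v = true), p v :=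
      sum_pair _ (partner_invol hA) (partner_cl hF hA) p
    have h3 : ∑ u ∈ Lf cl, (ω s(u, partner hA u) - (p (partner hA u) - p u))
        = (∑ u ∈ Lf cl, ω s(u, partner hA u)) - ((∑ u ∈ Lf cl, p (partner hA u))
          - ∑ u ∈ Lf cl, p u) := by
      rw [← Finset.sum_sub_distrib, ← Finset.sum_sub_distrib]
    rw [h3, h1, h2, hTdef]
  have keynn : ∀ (A : Finset (Sym2 V)) (hA : IsPMof F A), ∀ u ∈ Lf cl,
      0 ≤ ω s(u, partner hA u) - (p (partner hA u) - p u) := by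
    intro A hA u hu
    have hu' : cl u = false := (mem_filter.mp hu).2
    have hedge : s(u, partner hA u) ∈ F := hA.1 (partner_spec hA u)
    have := hpa u (partner hA u) hedge hu'
    omega
  have key2 : ∀ (A : Finset (Sym2 V)), IsPMof F A → T ≤ matchWeight ω A := by
    intro A hA
    have h1 := key1 A hA
    have h2 := Finset.sum_nonneg (keynn A hA)
    omega
  -- N is tight
  have hTN : matchWeight ω N = T := by
    have h1 := key1 N hN
    have h2 : ∀ u ∈ Lf cl, ω s(u, partner hN u) - (p (partner hN u) - p u) ≤ 0 := by
      intro u hu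
      have hu' : cl u = false := (mem_filter.mp hu).2
      have hclp : cl (partner hN u) = true := by
        cases hcc : cl (partner hN u)
        · exact absurd (hcc.trans hu'.symm) (partner_cl hF hN u)
        · rfl
      have hmem : s(partner hN u, u) ∈ N := by
        rw [Sym2.eq_swap]; exact partner_spec hN u
      have := hpb (partner hN u) u hmem hclp
      have heq : s(partner hN u, u) = s(u, partner hN u) := Sym2.eq_swap
      rw [heq] at this
      omega
    have h3 := Finset.sum_nonpos h2
    have h4 := Finset.sum_nonneg (keynn N hN)
    omega
  -- every edge of a minimum PM is tight
  have key3 : ∀ e ∈ M, ∀ a b : V, e = s(a, b) → cl a = false → ω e = p b - p a := by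
    intro e he a b heab ha
    subst heab
    obtain ⟨P, hP, hPmin, heP⟩ := hMU _ he
    have hPT : matchWeight ω P = T := by
      have h1 := hPmin N hN
      have h2 := key2 P hP
      omega
    have hsum0 : ∑ u ∈ Lf cl, (ω s(u, partner hP u) - (p (partner hP u) - p u)) = 0 := by
      have := key1 P hP
      omega
    have hall := (Finset.sum_eq_zero_iff_of_nonneg (keynn P hP)).mp hsum0
    have haL : a ∈ Lf cl := mem_filter.mpr ⟨mem_univ a, ha⟩
    have hterm := hall a haL
    have hb : b = partner hP a := by
      have h1 := partner_unique hP heP (Sym2.mem_mk_left a b)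
      rw [Sym2.eq_iff] at h1
      rcases h1 with ⟨-, h2⟩ | ⟨h2, h3⟩
      · exact h2
      · exfalso
        exact partner_cl hF hP a (by rw [← h2])
    rw [hb]
    omega
  -- conclude
  have hfinal : matchWeight ω M = T := by
    have h1 : matchWeight ω M = ∑ u ∈ Lf cl, ω s(u, partner hMF u) :=
      sum_left hF hMF _ (partner_spec hMF) ω
    have h2 : ∀ u ∈ Lf cl, ω s(u, partner hMF u) = p (partner hMF u) - p u := by
      intro u hu
      exact key3 _ (partner_spec hMF u) u (partner hMF u) rfl (mem_filter.mp hu).2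
    rw [h1, Finset.sum_congr rfl h2, Finset.sum_sub_distrib,
      sum_pair _ (partner_invol hMF) (partner_cl hF hMF) p, hTdef]
  rw [hfinal]
  exact key2 Q hQ

end PMaux

set_option linter.unusedSectionVars false
set_option maxHeartbeats 1000000

open PMaux Finset in
/-- Let `G = G₀` be a bipartite graph with a perfect matching, `k ≥ 1`, and
`w₀, …, w_{k-1}` positive integer weight functions on its edges.  Let `G_{i+1}` be the
subgraph of `G_i` formed by the union of all perfect matchings of `G_i` of minimum
`w_i`-weight (here the edge sets `E i` of the graphs `G_i`).  Let `B` exceed the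
`w_i`-weight of every perfect matching of `G` for every `i < k`, and let
`w = ∑_i w_i · B^(k-1-i)`.  Then for `1 ≤ i ≤ k`, any perfect matching `M₁` of `G_i`
has strictly smaller `w`-weight than any perfect matching `M₂` of `G_{i-1}` containing
an edge not in `G_i`. -/
theorem weight_lt_of_matching_in_next_graph {V : Type*} [Fintype V] [DecidableEq V]
    (G : SimpleGraph V) [DecidableRel G.Adj] (hbip : G.Colorable 2)
    (k : ℕ) (hk : 1 ≤ k)
    (w : ℕ → Sym2 V → ℤ) (hwpos : ∀ i < k, ∀ e, 0 < w i e)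
    (E : ℕ → Finset (Sym2 V))
    (hE0 : E 0 = G.edgeFinset)
    (hpm : ∃ M, IsPMof (E 0) M)
    (hEsucc : ∀ i < k, ∀ e, e ∈ E (i + 1) ↔
      ∃ M, IsPMof (E i) M ∧
        (∀ M', IsPMof (E i) M' → matchWeight (w i) M ≤ matchWeight (w i) M') ∧ e ∈ M)
    (B : ℤ) (hB : ∀ i < k, ∀ M, IsPMof (E 0) M → matchWeight (w i) M < B)
    (i : ℕ) (hi1 : 1 ≤ i) (hik : i ≤ k)
    (M₁ M₂ : Finset (Sym2 V))
    (hM₁ : IsPMof (E i) M₁) (hM₂ : IsPMof (E (i - 1)) M₂)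
    (hM₂out : ∃ e ∈ M₂, e ∉ E i) :
    matchWeight (fun e => ∑ j ∈ Finset.range k, w j e * B ^ (k - 1 - j)) M₁ <
      matchWeight (fun e => ∑ j ∈ Finset.range k, w j e * B ^ (k - 1 - j)) M₂ := by
  classical
  obtain ⟨Co⟩ := hbip
  set cl : V → Bool := fun v => decide (Co v = 1) with hcl
  have hcl2 : ∀ u v : V, G.Adj u v → cl u ≠ cl v := by
    intro u v h hc
    have hne : Co u ≠ Co v := Co.valid h
    rw [hcl] at hc
    simp only [decide_eq_decide] at hc
    have h2 : ∀ x : Fin 2, x = 0 ∨ x = 1 := by decide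
    rcases h2 (Co u) with h3 | h3 <;> rcases h2 (Co v) with h4 | h4
    · exact hne (h3.trans h4.symm)
    · rw [h3, h4] at hc; simp at hc
    · rw [h3, h4] at hc; simp at hc
    · exact hne (h3.trans h4.symm)
  have hstep : ∀ j, j < k → E (j + 1) ⊆ E j := by
    intro j hj e he
    obtain ⟨P, hP, -, heP⟩ := (hEsucc j hj e).mp he
    exact hP.1 heP
  have hsub0 : ∀ j, j ≤ k → E j ⊆ E 0 := by
    intro j
    induction j with
    | zero => intro _; exact subset_rfl
    | succ j ih => intro hj; exact (hstep j (by omega)).trans (ih (by omega))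
  have hFj : ∀ j, j ≤ k → ∀ u v : V, s(u, v) ∈ E j → cl u ≠ cl v := by
    intro j hj u v he
    have h1 : s(u, v) ∈ G.edgeFinset := by rw [← hE0]; exact hsub0 j hj he
    rw [SimpleGraph.mem_edgeFinset, SimpleGraph.mem_edgeSet] at h1
    exact hcl2 u v h1
  have hPM0 : ∀ j, j ≤ k → ∀ A, IsPMof (E j) A → IsPMof (E 0) A := fun j hj A hA =>
    ⟨fun e he => hsub0 j hj (hA.1 he), hA.2⟩
  have P1 : ∀ j, j < k → ∀ A, IsPMof (E (j + 1)) A →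
      IsPMof (E j) A ∧ ∀ Q, IsPMof (E j) Q → matchWeight (w j) A ≤ matchWeight (w j) Q := by
    intro j hj A hA
    have hA' : IsPMof (E j) A := ⟨hA.1.trans (hstep j hj), hA.2⟩
    refine ⟨hA', ?_⟩
    refine crux (hFj j (le_of_lt hj)) (w j) ?_ hA.2
    intro e he
    exact (hEsucc j hj e).mp (hA.1 he)
  have claim : ∀ j, j ≤ k → ∀ A SB, IsPMof (E j) A → IsPMof (E j) SB →
      ∀ j', j' < j → matchWeight (w j') A = matchWeight (w j') SB := by
    intro j
    induction j with
    | zero => intro _ A SB _ _ j' hj'; omega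
    | succ j ih =>
      intro hjk A SB hA hB' j' hj'
      have hjlt : j < k := by omega
      obtain ⟨hA', hAmin⟩ := P1 j hjlt A hA
      obtain ⟨hB'', hBmin⟩ := P1 j hjlt SB hB'
      rcases Nat.lt_or_ge j' j with h | h
      · exact ih (by omega) A SB hA' hB'' j' h
      · have : j' = j := by omega
        subst this
        exact le_antisymm (hAmin SB hB'') (hBmin A hA')
  set m := i - 1 with hm
  have hm1 : m + 1 = i := by omega
  have hmk : m < k := by omega
  have hM₁i : IsPMof (E (m + 1)) M₁ := by rw [hm1]; exact hM₁
  obtain ⟨hM₁', hM₁min⟩ := P1 m hmk M₁ hM₁i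
  have hlt : matchWeight (w m) M₁ < matchWeight (w m) M₂ := by
    have hle := hM₁min M₂ hM₂
    rcases lt_or_ge (matchWeight (w m) M₁) (matchWeight (w m) M₂) with h | h
    · exact h
    · exfalso
      obtain ⟨e, he, hout⟩ := hM₂out
      apply hout
      rw [← hm1]
      refine (hEsucc m hmk e).mpr ⟨M₂, hM₂, ?_, he⟩
      intro M' hM'
      exact le_trans (by omega) (hM₁min M' hM')
  have heqlow : ∀ j', j' < m → matchWeight (w j') M₁ = matchWeight (w j') M₂ :=
    claim m (by omega) M₁ M₂ hM₁' hM₂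
  set a : ℕ → ℤ := fun j => matchWeight (w j) M₁ with ha
  set b : ℕ → ℤ := fun j => matchWeight (w j) M₂ with hb
  have hann : ∀ j, j < k → 0 ≤ a j := fun j hj =>
    Finset.sum_nonneg fun e _ => (hwpos j hj e).le
  have hbnn : ∀ j, j < k → 0 ≤ b j := fun j hj =>
    Finset.sum_nonneg fun e _ => (hwpos j hj e).le
  have haB : ∀ j, j < k → a j < B := fun j hj => hB j hj M₁ (hPM0 i hik M₁ hM₁)
  have hbB : ∀ j, j < k → b j < B := fun j hj => hB j hj M₂ (hPM0 m (by omega) M₂ hM₂)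
  have hB1 : 1 ≤ B := by
    have h1 := hann 0 (by omega)
    have h2 := haB 0 (by omega)
    omega
  have hcomb : ∀ M : Finset (Sym2 V),
      matchWeight (fun e => ∑ j ∈ Finset.range k, w j e * B ^ (k - 1 - j)) M
        = ∑ j ∈ Finset.range k, matchWeight (w j) M * B ^ (k - 1 - j) := by
    intro M
    rw [matchWeight, Finset.sum_comm]
    exact Finset.sum_congr rfl fun j _ => by rw [matchWeight, Finset.sum_mul]
  rw [hcomb M₁, hcomb M₂]
  -- split at index m
  have e1 : ∀ c : ℕ → ℤ, ∑ j ∈ Finset.range k, c j * B ^ (k - 1 - j)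
      = ((∑ j ∈ Finset.range m, c j * B ^ (k - 1 - j)) + c m * B ^ (k - 1 - m))
        + ∑ j ∈ Finset.Ico (m + 1) k, c j * B ^ (k - 1 - j) := by
    intro c
    rw [← Finset.sum_range_add_sum_Ico _ (show m + 1 ≤ k by omega), Finset.sum_range_succ]
  show (∑ j ∈ Finset.range k, a j * B ^ (k - 1 - j))
      < ∑ j ∈ Finset.range k, b j * B ^ (k - 1 - j)
  rw [e1 a, e1 b]
  have heqsum : ∑ j ∈ Finset.range m, a j * B ^ (k - 1 - j)
      = ∑ j ∈ Finset.range m, b j * B ^ (k - 1 - j) :=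
    Finset.sum_congr rfl fun j hj => by
      simp only [ha, hb]; rw [heqlow j (Finset.mem_range.mp hj)]
  have hX : (0:ℤ) ≤ B ^ (k - 1 - m) := pow_nonneg (by omega) _
  have hmid : a m * B ^ (k - 1 - m) + B ^ (k - 1 - m) ≤ b m * B ^ (k - 1 - m) := by
    have ham : a m = matchWeight (w m) M₁ := rfl
    have hbm : b m = matchWeight (w m) M₂ := rfl
    have h1 : (a m + 1) * B ^ (k - 1 - m) ≤ b m * B ^ (k - 1 - m) :=
      mul_le_mul_of_nonneg_right (by omega) hX
    nlinarith [h1]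
  have hdiffsum : (∑ j ∈ Finset.Ico (m + 1) k, a j * B ^ (k - 1 - j))
      - (∑ j ∈ Finset.Ico (m + 1) k, b j * B ^ (k - 1 - j))
      = ∑ j ∈ Finset.Ico (m + 1) k, (a j - b j) * B ^ (k - 1 - j) := by
    rw [← Finset.sum_sub_distrib]
    exact Finset.sum_congr rfl fun j _ => by rw [sub_mul]
  have hdiff : ∑ j ∈ Finset.Ico (m + 1) k, (a j - b j) * B ^ (k - 1 - j)
      ≤ ∑ j ∈ Finset.Ico (m + 1) k, (B - 1) * B ^ (k - 1 - j) := by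
    refine Finset.sum_le_sum fun j hj => ?_
    have hjk : j < k := (Finset.mem_Ico.mp hj).2
    have h1 : a j - b j ≤ B - 1 := by
      have := haB j hjk; have := hbnn j hjk; omega
    exact mul_le_mul_of_nonneg_right h1 (pow_nonneg (by omega) _)
  have hgeo : ∑ j ∈ Finset.Ico (m + 1) k, (B - 1) * B ^ (k - 1 - j)
      = B ^ (k - 1 - m) - 1 := by
    rw [Finset.sum_Ico_eq_sum_range]
    have hT : k - (m + 1) = k - 1 - m := by omega
    have h2 : ∀ t ∈ Finset.range (k - (m + 1)),
        (B - 1) * B ^ (k - 1 - (m + 1 + t)) = (B - 1) * B ^ (k - (m + 1) - 1 - t) := by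
      intro t ht
      rw [Finset.mem_range] at ht
      congr 2
      omega
    rw [Finset.sum_congr rfl h2, ← Finset.mul_sum,
      Finset.sum_range_reflect (fun t => B ^ t) (k - (m + 1)), mul_comm,
      geom_sum_mul, hT]
  omega
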